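/- Work in the polynomial ring ℚ[x_2, x_3, x_4] and let ĝ(ζ) := ζ + x_2ζ^3 + x_3ζ^4 + x_4ζ^5 ∈ ℚ[x_2,x_3,x_4][[ζ]]. Define Δ̂_1(ζ) := ĝ(ζ) − ζ and Δ̂_{m+1}(ζ) := Δ̂_m(ĝ(ζ)) − Δ̂_m(ζ) for m ≥ 1. Then for every m ≥ 1, the coefficient of ζ^{2m+1} in Δ̂_m equals x_2^m·(2m−1)!!. -/

import Mathlib

/-- Composition of formal power series: `f.comp g = f ∘ g`, the power series obtained by
substituting `g` into `f`.  (This gives the usual composition whenever the constant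
coefficient of `g` is zero.) -/
noncomputable def PowerSeries.comp {R : Type*} [CommSemiring R] (f g : PowerSeries R) :
    PowerSeries R :=
  PowerSeries.mk fun n =>
    ∑ i ∈ Finset.range (n + 1), PowerSeries.coeff i f * PowerSeries.coeff n (g ^ i)

/-- The polynomial ring `ℚ[x₂, x₃, x₄]`, with `x₂ = X 0`, `x₃ = X 1`, `x₄ = X 2`. -/
abbrev Rq : Type := MvPolynomial (Fin 3) ℚ

/-- The power series `ĝ(ζ) = ζ + x₂ζ³ + x₃ζ⁴ + x₄ζ⁵` over `ℚ[x₂, x₃, x₄]`. -/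
noncomputable def ghat : PowerSeries Rq :=
  PowerSeries.X
    + PowerSeries.C (MvPolynomial.X 0 : Rq) * PowerSeries.X ^ 3
    + PowerSeries.C (MvPolynomial.X 1 : Rq) * PowerSeries.X ^ 4
    + PowerSeries.C (MvPolynomial.X 2 : Rq) * PowerSeries.X ^ 5

open Nat

noncomputable def pser : PowerSeries Rq :=
  PowerSeries.C (MvPolynomial.X 0 : Rq) + PowerSeries.C (MvPolynomial.X 1 : Rq) * PowerSeries.X
    + PowerSeries.C (MvPolynomial.X 2 : Rq) * PowerSeries.X ^ 2

lemma ghat_eq : ghat = PowerSeries.X + PowerSeries.X ^ 3 * pser := by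
  rw [ghat, pser]; ring

lemma coeff_ghat_pow (i n : ℕ) (hn : n ≤ i + 2) :
    PowerSeries.coeff n (ghat ^ i) =
      if n = i then 1 else if n = i + 2 then (i : Rq) * MvPolynomial.X 0 else 0 := by
  rcases Nat.eq_zero_or_pos i with hi | hi
  · subst hi
    simp only [pow_zero, PowerSeries.coeff_one]
    split_ifs <;> simp_all
  obtain ⟨j, rfl⟩ : ∃ j, i = j + 1 := ⟨i - 1, by omega⟩
  rw [ghat_eq, add_pow, map_sum]
  have hterm : ∀ k ∈ Finset.range (j + 1 + 1),
      PowerSeries.coeff n (PowerSeries.X ^ k * (PowerSeries.X ^ 3 * pser) ^ (j + 1 - k)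
        * ((j + 1).choose k : PowerSeries Rq)) =
      (if k = j + 1 then (if n = j + 1 then (1 : Rq) else 0) else 0)
        + (if k = j then (if n = j + 3 then ((j + 1 : ℕ) : Rq) * MvPolynomial.X 0 else 0)
            else 0) := by
    intro k hk
    rw [Finset.mem_range] at hk
    have e1 : PowerSeries.X ^ k * (PowerSeries.X ^ 3 * pser) ^ (j + 1 - k)
        * ((j + 1).choose k : PowerSeries Rq)
        = (pser ^ (j + 1 - k) * ((j + 1).choose k : PowerSeries Rq))
          * PowerSeries.X ^ (k + 3 * (j + 1 - k)) := by
      rw [mul_pow, ← pow_mul, pow_add]; ring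
    rw [e1, PowerSeries.coeff_mul_X_pow']
    by_cases hk1 : k = j + 1
    · subst hk1
      rw [Nat.sub_self, pow_zero, Nat.choose_self, Nat.cast_one, mul_one,
        Nat.mul_zero, Nat.add_zero, if_pos rfl, if_neg (show j + 1 ≠ j by omega), add_zero,
        PowerSeries.coeff_one]
      split_ifs <;> first | rfl | omega
    · by_cases hk2 : k = j
      · subst hk2
        have h1 : k + 1 - k = 1 := by omega
        rw [h1]
        rw [if_neg hk1, if_pos rfl, zero_add]
        have hch : (k + 1).choose k = k + 1 := Nat.choose_succ_self_right k
        split_ifs with h2 h3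
        · have h4 : n - (k + 3 * 1) = 0 := by omega
          rw [h4, pow_one]
          rw [PowerSeries.coeff_zero_eq_constantCoeff, map_mul, map_natCast, hch]
          rw [show PowerSeries.constantCoeff pser = MvPolynomial.X 0 by simp [pser]]
          push_cast
          ring
        · exfalso; omega
        · exfalso; omega
        · rfl
      · rw [if_neg (by omega), if_neg hk1, if_neg hk2, add_zero]
  rw [Finset.sum_congr rfl hterm, Finset.sum_add_distrib, Finset.sum_ite_eq',
    Finset.sum_ite_eq']
  rw [if_pos (Finset.mem_range.mpr (show j + 1 < j + 1 + 1 by omega)),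
    if_pos (Finset.mem_range.mpr (show j < j + 1 + 1 by omega))]
  split_ifs <;> first | omega | (push_cast; ring)

lemma delta_aux (Δ : ℕ → PowerSeries Rq)
    (hΔ1 : Δ 1 = ghat - PowerSeries.X)
    (hΔ : ∀ m : ℕ, 1 ≤ m → Δ (m + 1) = PowerSeries.comp (Δ m) ghat - Δ m) :
    ∀ m : ℕ, 1 ≤ m →
      (∀ n, n < 2 * m + 1 → PowerSeries.coeff n (Δ m) = 0) ∧
      PowerSeries.coeff (2 * m + 1) (Δ m) =
        MvPolynomial.X 0 ^ m * (((2 * m - 1)‼ : ℕ) : Rq) := by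
  intro m hm
  induction m, hm using Nat.le_induction with
  | base =>
    constructor
    · intro n hn
      interval_cases n <;>
        simp [hΔ1, ghat, PowerSeries.coeff_X, PowerSeries.coeff_X_pow]
    · simp [hΔ1, ghat, PowerSeries.coeff_X, PowerSeries.coeff_X_pow,
        Nat.doubleFactorial]
  | succ m hm ih =>
    have hdf : (2 * (m + 1) - 1)‼ = (2 * m + 1) * (2 * m - 1)‼ := by
      obtain ⟨k, rfl⟩ : ∃ k, m = k + 1 := ⟨m - 1, by omega⟩
      rw [show 2 * (k + 1 + 1) - 1 = (2 * k + 1) + 2 from by omega,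
        show 2 * (k + 1) - 1 = 2 * k + 1 from by omega, Nat.doubleFactorial_add_two]
      congr 1
    constructor
    · intro n hn
      have hn' : n ≤ 2 * m + 2 := by omega
      rw [hΔ m hm, map_sub, PowerSeries.comp, PowerSeries.coeff_mk]
      have hterm : ∀ i ∈ Finset.range (n + 1),
          PowerSeries.coeff i (Δ m) * PowerSeries.coeff n (ghat ^ i) =
          if i = n then PowerSeries.coeff n (Δ m) else 0 := by
        intro i hi
        rw [Finset.mem_range] at hi
        by_cases h : i = n
        · subst h
          rw [if_pos rfl, coeff_ghat_pow i i (by omega), if_pos rfl, mul_one]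
        · rw [if_neg h]
          by_cases h2 : i < 2 * m + 1
          · rw [ih.1 i h2, zero_mul]
          · rw [coeff_ghat_pow i n (by omega), if_neg (by omega), if_neg (by omega),
              mul_zero]
      rw [Finset.sum_congr rfl hterm, Finset.sum_ite_eq' _ n,
        if_pos (Finset.mem_range.mpr (show n < n + 1 by omega)), sub_self]
    · rw [show 2 * (m + 1) + 1 = 2 * m + 3 from by omega]
      rw [hΔ m hm, map_sub, PowerSeries.comp, PowerSeries.coeff_mk]
      have hterm : ∀ i ∈ Finset.range (2 * m + 3 + 1),
          PowerSeries.coeff i (Δ m) * PowerSeries.coeff (2 * m + 3) (ghat ^ i) =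
          (if i = 2 * m + 3 then PowerSeries.coeff (2 * m + 3) (Δ m) else 0)
          + (if i = 2 * m + 1 then
              MvPolynomial.X 0 ^ m * (((2 * m - 1)‼ : ℕ) : Rq)
                * (((2 * m + 1 : ℕ) : Rq) * MvPolynomial.X 0) else 0) := by
        intro i hi
        rw [Finset.mem_range] at hi
        by_cases h : i = 2 * m + 3
        · subst h
          rw [if_pos rfl, if_neg (by omega), add_zero,
            coeff_ghat_pow _ _ (by omega), if_pos rfl, mul_one]
        · rw [if_neg h, zero_add]
          by_cases h2 : i = 2 * m + 1
          · subst h2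
            rw [if_pos rfl, ih.2, coeff_ghat_pow _ _ (by omega), if_neg (by omega),
              if_pos (by omega)]
          · rw [if_neg h2]
            by_cases h3 : i < 2 * m + 1
            · rw [ih.1 i h3, zero_mul]
            · rw [coeff_ghat_pow _ _ (by omega), if_neg (by omega), if_neg (by omega),
                mul_zero]
      rw [Finset.sum_congr rfl hterm, Finset.sum_add_distrib, Finset.sum_ite_eq',
        Finset.sum_ite_eq',
        if_pos (Finset.mem_range.mpr (show 2 * m + 3 < 2 * m + 3 + 1 by omega)),
        if_pos (Finset.mem_range.mpr (show 2 * m + 1 < 2 * m + 3 + 1 by omega)),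
        hdf]
      push_cast
      ring

theorem delta_hat_leading_coefficient
    (Δ : ℕ → PowerSeries Rq)
    (hΔ1 : Δ 1 = ghat - PowerSeries.X)
    (hΔ : ∀ m : ℕ, 1 ≤ m → Δ (m + 1) = PowerSeries.comp (Δ m) ghat - Δ m) :
    ∀ m : ℕ, 1 ≤ m →
      PowerSeries.coeff (2 * m + 1) (Δ m) =
        MvPolynomial.X 0 ^ m * (((2 * m - 1)‼ : ℕ) : Rq) := by
  intro m hm
  exact (delta_aux Δ hΔ1 hΔ m hm).2
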